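/- If G is a connected topological group, then every continuous partial action of G on a compact space X is a global action, i.e., X_t = X for all t ∈ G. -/

import Mathlib

/-- A continuous partial action of a topological group `G` on a topological space `X`. -/
structure TopPartialAction (G : Type*) [Group G] [TopologicalSpace G]
    (X : Type*) [TopologicalSpace X] where
  dom : G → Set X
  act : G → X → X
  dom_open : ∀ t : G, IsOpen (dom t)
  bijOn : ∀ t : G, Set.BijOn (act t) (dom t⁻¹) (dom t)
  graph_open : IsOpen {p : G × X | p.2 ∈ dom p.1⁻¹}
  act_cont : ContinuousOn (fun p : G × X => act p.1 p.2) {p : G × X | p.2 ∈ dom p.1⁻¹}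
  dom_one : dom 1 = Set.univ
  act_one : ∀ x : X, act 1 x = x
  inv_eq : ∀ t : G, ∀ x ∈ dom t⁻¹, act t⁻¹ (act t x) = x
  extend : ∀ s t : G, ∀ x ∈ dom t⁻¹, act t x ∈ dom s⁻¹ →
    x ∈ dom (s * t)⁻¹ ∧ act (s * t) x = act s (act t x)

/-- If `G` is a connected topological group, every continuous partial action of `G` on a
compact space is a global action: `dom t = X` for all `t`. -/
theorem connected_partial_action_is_global
    (G : Type*) [Group G] [TopologicalSpace G] [IsTopologicalGroup G] [ConnectedSpace G]
    (X : Type*) [TopologicalSpace X] [CompactSpace X]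
    (α : TopPartialAction G X) :
    ∀ t : G, α.dom t = Set.univ := by
  -- T is the set of t with dom t⁻¹ = univ; it is open by the tube lemma.
  set T : Set G := {t | α.dom t⁻¹ = Set.univ} with hT
  have hTopen : IsOpen T := by
    rw [isOpen_iff_forall_mem_open]
    intro t ht
    have hsub : ({t} : Set G) ×ˢ (Set.univ : Set X) ⊆ {p : G × X | p.2 ∈ α.dom p.1⁻¹} := by
      rintro ⟨s, x⟩ ⟨hs, -⟩
      simp only [Set.mem_singleton_iff] at hs
      subst hs
      have : α.dom s⁻¹ = Set.univ := ht
      show x ∈ α.dom s⁻¹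
      rw [this]; trivial
    obtain ⟨u, v, hu, hv, htu, hXv, huv⟩ :=
      generalized_tube_lemma isCompact_singleton isCompact_univ α.graph_open hsub
    refine ⟨u, ?_, hu, htu rfl⟩
    intro s hs
    apply Set.eq_univ_of_forall
    intro x
    exact huv (Set.mk_mem_prod hs (hXv (Set.mem_univ x)))
  -- mul stability
  have hmul : ∀ a b : G, α.dom b⁻¹ = Set.univ → α.dom a⁻¹ = Set.univ →
      α.dom (a * b)⁻¹ = Set.univ := by
    intro a b hb ha
    apply Set.eq_univ_of_forall
    intro x
    have hx : x ∈ α.dom b⁻¹ := by rw [hb]; trivial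
    have hy : α.act b x ∈ α.dom a⁻¹ := by rw [ha]; trivial
    exact (α.extend a b x hx hy).1
  -- The subgroup
  let H : Subgroup G :=
    { carrier := {t | α.dom t = Set.univ ∧ α.dom t⁻¹ = Set.univ}
      one_mem' := by constructor <;> simp [α.dom_one]
      mul_mem' := by
        rintro a b ⟨ha1, ha2⟩ ⟨hb1, hb2⟩
        refine ⟨?_, hmul a b hb2 ha2⟩
        have := hmul b⁻¹ a⁻¹ (by simpa using ha1) (by simpa using hb1)
        simpa [mul_inv_rev] using this
      inv_mem' := by
        rintro a ⟨ha1, ha2⟩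
        exact ⟨ha2, by simpa using ha1⟩ }
  have hHopen : IsOpen (H : Set G) := by
    have : (H : Set G) = (fun t : G => t⁻¹) ⁻¹' T ∩ T := by
      ext t
      simp only [Set.mem_inter_iff, Set.mem_preimage, hT, Set.mem_setOf_eq, inv_inv]
      exact Iff.rfl
    rw [this]
    exact ((hTopen.preimage continuous_inv)).inter hTopen
  have hHclosed : IsClosed (H : Set G) := H.isClosed_of_isOpen hHopen
  have hHuniv : (H : Set G) = Set.univ :=
    IsClopen.eq_univ ⟨hHclosed, hHopen⟩ ⟨1, H.one_mem⟩
  intro t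
  have ht : t ∈ (H : Set G) := by rw [hHuniv]; trivial
  exact ht.1
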